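/- For d ≥ 3 and η_d := S_d[cos], the derivative satisfies η_d'(s) = -(s/d) η_{d+2}(s) for all s ≥ 0, and |η_d'(s)| ≤ c_{d+2}/d with η_d'(0) = 0. -/

import Mathlib

open MeasureTheory Real Set

noncomputable def c (d : ℕ) : ℝ :=
  2 * Real.Gamma ((d : ℝ) / 2) / (Real.sqrt π * Real.Gamma (((d : ℝ) - 1) / 2))

noncomputable def rho (d : ℕ) (t : ℝ) : ℝ :=
  c d * (1 - t ^ 2) ^ (((d : ℝ) - 3) / 2)

noncomputable def S (d : ℕ) (f : ℝ → ℝ) (s : ℝ) : ℝ :=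
  ∫ t in (0:ℝ)..1, f (t * s) * rho d t

lemma cont_aux {e : ℝ} (he : 0 ≤ e) : Continuous fun t : ℝ => (1 - t ^ 2) ^ e := by
  rw [continuous_iff_continuousAt]
  intro t
  exact (Real.continuousAt_rpow_const _ _ (Or.inr he)).comp
    ((continuous_const.sub (continuous_pow 2)).continuousAt)

lemma c_pos (d : ℕ) (hd : 3 ≤ d) : 0 < c d := by
  have h3 : (3:ℝ) ≤ (d:ℝ) := by exact_mod_cast hd
  exact div_pos (mul_pos two_pos (Real.Gamma_pos_of_pos (by linarith)))
    (mul_pos (Real.sqrt_pos.mpr Real.pi_pos) (Real.Gamma_pos_of_pos (by linarith)))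

lemma hasDerivAt_w (d : ℕ) (hd : 3 ≤ d) (t : ℝ) :
    HasDerivAt (fun t : ℝ => -(1 - t ^ 2) ^ (((d:ℝ) - 1) / 2) / ((d:ℝ) - 1))
      (t * (1 - t ^ 2) ^ (((d:ℝ) - 3) / 2)) t := by
  have h3 : (3:ℝ) ≤ (d:ℝ) := by exact_mod_cast hd
  have hb : 1 ≤ ((d:ℝ) - 1) / 2 := by linarith
  have h1 : HasDerivAt (fun t : ℝ => 1 - t ^ 2) (-(2 * t)) t := by
    simpa using ((hasDerivAt_pow 2 t).const_sub 1)
  have h2 := (Real.hasDerivAt_rpow_const (p := ((d:ℝ) - 1) / 2)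
    (Or.inr hb)).comp t h1
  have h4 := (h2.neg).div_const ((d:ℝ) - 1)
  refine h4.congr_deriv ?_
  rw [show ((d:ℝ) - 1) / 2 - 1 = ((d:ℝ) - 3) / 2 by ring]
  have hne : ((d:ℝ)) - 1 ≠ 0 := by linarith
  field_simp

lemma c_id (d : ℕ) (hd : 3 ≤ d) : (d:ℝ) * c d = ((d:ℝ) - 1) * c (d + 2) := by
  have h3 : (3:ℝ) ≤ (d:ℝ) := by exact_mod_cast hd
  have hg1 : Real.Gamma (((d:ℝ) + 2) / 2) = ((d:ℝ) / 2) * Real.Gamma ((d:ℝ) / 2) := by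
    rw [show ((d:ℝ) + 2) / 2 = (d:ℝ) / 2 + 1 by ring, Real.Gamma_add_one (by linarith)]
  have hg2 : Real.Gamma ((((d:ℝ) + 2) - 1) / 2)
      = (((d:ℝ) - 1) / 2) * Real.Gamma (((d:ℝ) - 1) / 2) := by
    rw [show (((d:ℝ) + 2) - 1) / 2 = ((d:ℝ) - 1) / 2 + 1 by ring,
      Real.Gamma_add_one (by linarith)]
  have hΓ : Real.Gamma (((d:ℝ) - 1) / 2) ≠ 0 := (Real.Gamma_pos_of_pos (by linarith)).ne'
  have hπ : Real.sqrt π ≠ 0 := (Real.sqrt_pos.mpr Real.pi_pos).ne'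
  have h1 : ((d:ℝ)) - 1 ≠ 0 := by linarith
  simp only [c]
  push_cast
  rw [hg1, hg2]
  field_simp

lemma hasDerivAt_S (d : ℕ) (hd : 3 ≤ d) (s : ℝ) :
    HasDerivAt (S d Real.cos)
      (∫ t in (0:ℝ)..1, -(t * Real.sin (t * s)) * rho d t) s := by
  have h3 : (3:ℝ) ≤ (d:ℝ) := by exact_mod_cast hd
  have ha : 0 ≤ ((d:ℝ) - 3) / 2 := by linarith
  have hrc : Continuous (rho d) := continuous_const.mul (cont_aux ha)
  have H := intervalIntegral.hasDerivAt_integral_of_dominated_loc_of_deriv_le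
    (F := fun x t => Real.cos (t * x) * rho d t)
    (F' := fun x t => -(t * Real.sin (t * x)) * rho d t)
    (x₀ := s) (s := Metric.ball s 1) (a := (0:ℝ)) (b := 1) (μ := volume)
    (bound := fun t => |rho d t|) (Metric.ball_mem_nhds s one_pos)
    (Filter.Eventually.of_forall fun x =>
      ((Real.continuous_cos.comp (continuous_id.mul continuous_const)).mul
        hrc).aestronglyMeasurable)
    (((Real.continuous_cos.comp (continuous_id.mul continuous_const)).mul
        hrc).intervalIntegrable 0 1)
    (((continuous_id.mul (Real.continuous_sin.comp
        (continuous_id.mul continuous_const))).neg.mul hrc).aestronglyMeasurable)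
    (Filter.Eventually.of_forall fun t ht x _ => by
      rw [Set.uIoc_of_le (zero_le_one)] at ht
      rw [Real.norm_eq_abs, abs_mul, abs_neg, abs_mul]
      have h1 : |t| ≤ 1 := by rw [abs_of_pos ht.1]; exact ht.2
      have h2 : |Real.sin (t * x)| ≤ 1 := Real.abs_sin_le_one _
      have h5 : |t| * |Real.sin (t * x)| ≤ 1 := mul_le_one₀ h1 (abs_nonneg _) h2
      calc |t| * |Real.sin (t * x)| * |rho d t| ≤ 1 * |rho d t| :=
            mul_le_mul_of_nonneg_right h5 (abs_nonneg _)
        _ = |rho d t| := one_mul _)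
    ((hrc.abs).intervalIntegrable 0 1)
    (Filter.Eventually.of_forall fun t _ x _ => by
      have := ((Real.hasDerivAt_cos (t * x)).comp x
        ((hasDerivAt_id x).const_mul t)).mul_const (rho d t)
      refine this.congr_deriv ?_
      ring)
  exact H.2

lemma parts (d : ℕ) (hd : 3 ≤ d) (s : ℝ) :
    (∫ t in (0:ℝ)..1, -(t * Real.sin (t * s)) * rho d t)
      = -(s / d) * S (d + 2) Real.cos s := by
  have h3 : (3:ℝ) ≤ (d:ℝ) := by exact_mod_cast hd
  have ha : 0 ≤ ((d:ℝ) - 3) / 2 := by linarith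
  have hd1 : ((d:ℝ)) - 1 ≠ 0 := by linarith
  have hdne : (d:ℝ) ≠ 0 := by linarith
  have hb0 : ((d:ℝ) - 1) / 2 ≠ 0 := ne_of_gt (by linarith)
  have hparts := intervalIntegral.integral_mul_deriv_eq_deriv_mul
    (u := fun t => Real.sin (t * s)) (u' := fun t => Real.cos (t * s) * s)
    (v := fun t : ℝ => -(1 - t ^ 2) ^ (((d:ℝ) - 1) / 2) / ((d:ℝ) - 1))
    (v' := fun t : ℝ => t * (1 - t ^ 2) ^ (((d:ℝ) - 3) / 2))
    (a := (0:ℝ)) (b := 1)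
    (fun t _ => by
      exact ((Real.hasDerivAt_sin (t * s)).comp t (hasDerivAt_mul_const s)))
    (fun t _ => hasDerivAt_w d hd t)
    (((Real.continuous_cos.comp (continuous_id.mul continuous_const)).mul
        continuous_const).intervalIntegrable 0 1)
    ((continuous_id.mul (cont_aux ha)).intervalIntegrable 0 1)
  simp only [one_pow, sub_self, Real.zero_rpow hb0, zero_mul, Real.sin_zero, mul_zero,
    neg_zero, zero_div, mul_zero, zero_sub, sub_zero, zero_mul] at hparts
  -- hparts : ∫ sin(ts) * (t (1-t²)^a) = - ∫ (cos(ts)*s) * (-(1-t²)^b/(d-1))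
  have hL : ∀ t : ℝ, -(t * Real.sin (t * s)) * rho d t
      = -c d * (Real.sin (t * s) * (t * (1 - t ^ 2) ^ (((d:ℝ) - 3) / 2))) := fun t => by
    rw [rho]; ring
  have hR : ∀ t : ℝ, Real.cos (t * s) * rho (d + 2) t
      = c (d + 2) * (Real.cos (t * s) * (1 - t ^ 2) ^ (((d:ℝ) - 1) / 2)) := fun t => by
    rw [rho, show (((d + 2 : ℕ):ℝ) - 3) / 2 = ((d:ℝ) - 1) / 2 by push_cast; ring]; ring
  have hM : ∀ t : ℝ, (Real.cos (t * s) * s) * (-(1 - t ^ 2) ^ (((d:ℝ) - 1) / 2) / ((d:ℝ) - 1))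
      = (-s / ((d:ℝ) - 1)) * (Real.cos (t * s) * (1 - t ^ 2) ^ (((d:ℝ) - 1) / 2)) := fun t => by
    ring
  simp_rw [hL, intervalIntegral.integral_const_mul, hparts, hM,
    intervalIntegral.integral_const_mul]
  have hS : S (d + 2) Real.cos s
      = ∫ t in (0:ℝ)..1, Real.cos (t * s) * rho (d + 2) t := rfl
  rw [hS]
  simp_rw [hR, intervalIntegral.integral_const_mul]
  set J := ∫ t in (0:ℝ)..1, Real.cos (t * s) * (1 - t ^ 2) ^ (((d:ℝ) - 1) / 2)
  field_simp
  linear_combination (-(s * J)) * c_id d hd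

lemma integral_t_rho (d : ℕ) (hd : 3 ≤ d) :
    ∫ t in (0:ℝ)..1, t * rho d t = c d / ((d:ℝ) - 1) := by
  have h3 : (3:ℝ) ≤ (d:ℝ) := by exact_mod_cast hd
  have ha : 0 ≤ ((d:ℝ) - 3) / 2 := by linarith
  have hb0 : ((d:ℝ) - 1) / 2 ≠ 0 := ne_of_gt (by linarith)
  have key := intervalIntegral.integral_eq_sub_of_hasDerivAt
    (f := fun t : ℝ => -(1 - t ^ 2) ^ (((d:ℝ) - 1) / 2) / ((d:ℝ) - 1))
    (f' := fun t : ℝ => t * (1 - t ^ 2) ^ (((d:ℝ) - 3) / 2))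
    (fun t _ => hasDerivAt_w d hd t)
    ((continuous_id.mul (cont_aux ha)).intervalIntegrable 0 1)
  simp only [one_pow, sub_self, Real.zero_rpow hb0, zero_pow, Real.one_rpow, neg_zero,
    zero_div, sub_zero, zero_sub, neg_neg] at key
  have key2 : ∫ t in (0:ℝ)..1, t * (1 - t ^ 2) ^ (((d:ℝ) - 3) / 2)
      = 1 / ((d:ℝ) - 1) := by
    rw [key]; norm_num [Real.one_rpow]; ring
  have hL : ∀ t : ℝ, t * rho d t
      = c d * (t * (1 - t ^ 2) ^ (((d:ℝ) - 3) / 2)) := fun t => by rw [rho]; ring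
  simp_rw [hL, intervalIntegral.integral_const_mul, key2]
  ring

theorem eta_deriv (d : ℕ) (hd : 3 ≤ d) :
    (∀ s : ℝ, 0 ≤ s → deriv (S d Real.cos) s = -(s / d) * S (d + 2) Real.cos s) ∧
    (∀ s : ℝ, 0 ≤ s → |deriv (S d Real.cos) s| ≤ c (d + 2) / d) ∧
    deriv (S d Real.cos) 0 = 0 := by
  have h3 : (3:ℝ) ≤ (d:ℝ) := by exact_mod_cast hd
  have ha : 0 ≤ ((d:ℝ) - 3) / 2 := by linarith
  have hrc : Continuous (rho d) := continuous_const.mul (cont_aux ha)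
  have hderiv : ∀ s : ℝ, deriv (S d Real.cos) s
      = ∫ t in (0:ℝ)..1, -(t * Real.sin (t * s)) * rho d t :=
    fun s => (hasDerivAt_S d hd s).deriv
  have hd1 : ((d:ℝ)) - 1 ≠ 0 := by linarith
  have hdne : (d:ℝ) ≠ 0 := by linarith
  have hcc : c (d + 2) / (d:ℝ) = c d / ((d:ℝ) - 1) := by
    rw [div_eq_div_iff hdne hd1]
    linear_combination -c_id d hd
  refine ⟨fun s _ => by rw [hderiv s, parts d hd s], fun s _ => ?_, ?_⟩
  · rw [hderiv s]
    have h1 : |∫ t in (0:ℝ)..1, -(t * Real.sin (t * s)) * rho d t|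
        ≤ ∫ t in (0:ℝ)..1, |(-(t * Real.sin (t * s)) * rho d t)| :=
      intervalIntegral.abs_integral_le_integral_abs zero_le_one
    have h2 : (∫ t in (0:ℝ)..1, |(-(t * Real.sin (t * s)) * rho d t)|)
        ≤ ∫ t in (0:ℝ)..1, t * rho d t := by
      apply intervalIntegral.integral_mono_on zero_le_one
      · exact (((continuous_id.mul (Real.continuous_sin.comp
          (continuous_id.mul continuous_const))).neg.mul hrc).abs).intervalIntegrable 0 1
      · exact ((continuous_id.mul hrc)).intervalIntegrable 0 1
      · intro t ht
        have hrn : 0 ≤ rho d t := by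
          apply mul_nonneg (c_pos d hd).le
          exact Real.rpow_nonneg (by nlinarith [ht.1, ht.2]) _
        rw [abs_mul, abs_neg, abs_mul, abs_of_nonneg hrn, abs_of_nonneg ht.1]
        have hs1 : |Real.sin (t * s)| ≤ 1 := Real.abs_sin_le_one _
        calc t * |Real.sin (t * s)| * rho d t = t * (|Real.sin (t * s)| * rho d t) := by ring
          _ ≤ t * (1 * rho d t) :=
              mul_le_mul_of_nonneg_left (mul_le_mul_of_nonneg_right hs1 hrn) ht.1
          _ = t * rho d t := by ring
    calc |∫ t in (0:ℝ)..1, -(t * Real.sin (t * s)) * rho d t|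
        ≤ ∫ t in (0:ℝ)..1, t * rho d t := h1.trans h2
      _ = c d / ((d:ℝ) - 1) := integral_t_rho d hd
      _ = c (d + 2) / d := hcc.symm
  · rw [hderiv 0]
    simp [parts d hd 0]
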